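/- For a non-singular simplicial set X, the inclusion of the category of elements of the non-degenerate part into the full category of elements has the property that for every simplex x of X, the comma category (elt(X^{nd}))_{/x} has a terminal object, given by the non-degenerate part r(x) with the unique degeneracy operator σ_x satisfying x = σ_x · r(x). -/

import Mathlib

open CategoryTheory CategoryTheory.Limits Simplicial

/-- A simplex `x ∈ X_n` is non-degenerate: it is not in the image of `X(g)` for any
map `g : ⦋n⦌ → [k]` with `k < n` (equivalently, it is not a degeneracy). -/
def SSet.Nondeg (X : SSet) {n : ℕ} (x : X _⦋n⦌) : Prop :=
  ∀ (k : ℕ), k < n → ∀ (g : (⦋n⦌ : SimplexCategory) ⟶ ⦋k⦌) (y : X _⦋k⦌),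
    X.map g.op y ≠ x

/-- A simplicial set is non-singular if the characteristic map `Δⁿ → X` of every
non-degenerate `n`-simplex is injective in every degree. -/
def SSet.NonSingular (X : SSet) : Prop :=
  ∀ (n : ℕ) (x : X _⦋n⦌), SSet.Nondeg X x →
    ∀ (k : ℕ) (g₁ g₂ : (⦋k⦌ : SimplexCategory) ⟶ ⦋n⦌),
      X.map g₁.op x = X.map g₂.op x → g₁ = g₂


/-- Epi-mono factorization in the simplex category, with objects named `[c]`. -/
lemma simplex_factor {a b : ℕ} (g : (⦋a⦌ : SimplexCategory) ⟶ ⦋b⦌) :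
    ∃ (c : ℕ) (e : (⦋a⦌ : SimplexCategory) ⟶ ⦋c⦌) (m : (⦋c⦌ : SimplexCategory) ⟶ ⦋b⦌),
      c ≤ b ∧ c ≤ a ∧ Epi e ∧ Mono m ∧ e ≫ m = g := by
  refine ⟨(image g).len,
    factorThruImage g ≫ eqToHom (SimplexCategory.mk_len (image g)).symm,
    eqToHom (SimplexCategory.mk_len (image g)) ≫ image.ι g, ?_, ?_, ?_, ?_, by simp⟩
  · simpa using SimplexCategory.len_le_of_mono
      (image.ι g)
  · simpa using SimplexCategory.len_le_of_epi
      (factorThruImage g)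
  · exact epi_comp _ _
  · exact mono_comp _ _

/-- Eilenberg–Zilber existence. -/
lemma ez_exists (X : SSet) : ∀ (n : ℕ) (x : X _⦋n⦌),
    ∃ (k : ℕ) (σ : (⦋n⦌ : SimplexCategory) ⟶ ⦋k⦌) (z : X _⦋k⦌),
      Epi σ ∧ SSet.Nondeg X z ∧ X.map σ.op z = x := by
  intro n
  induction n using Nat.strong_induction_on with
  | _ n ih =>
    intro x
    by_cases hx : SSet.Nondeg X x
    · exact ⟨n, 𝟙 _, x, inferInstance, hx, by simp⟩
    · simp only [SSet.Nondeg, not_forall, not_ne_iff] at hx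
      obtain ⟨k, hk, g, y, hy⟩ := hx
      obtain ⟨c, e, m, hcb, hca, he, hm, hfac⟩ := simplex_factor g
      obtain ⟨k', σ', z, hσ', hz, hzz⟩ := ih c (lt_of_le_of_lt hcb hk) (X.map m.op y)
      refine ⟨k', e ≫ σ', z, @epi_comp _ _ _ _ _ _ he _ hσ', hz, ?_⟩
      rw [op_comp, FunctorToTypes.map_comp_apply, hzz, ← FunctorToTypes.map_comp_apply,
        ← op_comp, hfac, hy]

lemma nondeg_id {X : SSet} {k : ℕ} {z : X _⦋k⦌} (hz : SSet.Nondeg X z)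
    (u : (⦋k⦌ : SimplexCategory) ⟶ ⦋k⦌) {w : X _⦋k⦌} (hw : X.map u.op w = z) :
    u = 𝟙 _ := by
  obtain ⟨c, e, m, hcb, _, he, hm, hfac⟩ := simplex_factor u
  rcases lt_or_eq_of_le hcb with h | h
  · exact absurd (by rw [← hfac, op_comp, FunctorToTypes.map_comp_apply] at hw; exact hw)
      (hz c h e (X.map m.op w))
  · subst h
    haveI := hm
    haveI := he
    rw [SimplexCategory.eq_id_of_mono m, Category.comp_id] at hfac
    rw [← hfac]
    exact SimplexCategory.eq_id_of_epi e

theorem nondeg_comma_terminal (X : SSet) (hX : SSet.NonSingular X)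
    (n : ℕ) (x : X _⦋n⦌) :
    ∃ (k : ℕ) (σ : (⦋n⦌ : SimplexCategory) ⟶ ⦋k⦌) (z : X _⦋k⦌),
      Epi σ ∧ SSet.Nondeg X z ∧ X.map σ.op z = x ∧
      ∀ (j : ℕ) (f : (⦋n⦌ : SimplexCategory) ⟶ ⦋j⦌) (y : X _⦋j⦌),
        SSet.Nondeg X y → X.map f.op y = x →
        ∃! g : (⦋k⦌ : SimplexCategory) ⟶ ⦋j⦌, X.map g.op y = z ∧ σ ≫ g = f := by
  obtain ⟨k, σ, z, hσ, hz, hzx⟩ := ez_exists X n x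
  haveI := hσ
  refine ⟨k, σ, z, hσ, hz, hzx, ?_⟩
  intro j f y hy hfy
  -- factor f = e ≫ m
  obtain ⟨l, e, m, _, _, he, hm, hfac⟩ := simplex_factor f
  haveI := he
  -- EZ for X.map m.op y
  obtain ⟨l', τ, w', hτ, hw', hww⟩ := ez_exists X l (X.map m.op y)
  haveI := hτ
  have hρ : X.map (e ≫ τ).op w' = x := by
    rw [op_comp, FunctorToTypes.map_comp_apply, hww, ← FunctorToTypes.map_comp_apply,
      ← op_comp, hfac, hfy]
  haveI hρe : Epi (e ≫ τ) := epi_comp _ _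
  -- k = l'
  haveI := isSplitEpi_of_epi σ
  haveI := isSplitEpi_of_epi (e ≫ τ)
  have hts : X.map (section_ σ ≫ (e ≫ τ)).op w' = z := by
    rw [op_comp, FunctorToTypes.map_comp_apply, hρ, ← hzx, ← FunctorToTypes.map_comp_apply,
      ← op_comp, IsSplitEpi.id, op_id, FunctorToTypes.map_id_apply]
  have hst : X.map (section_ (e ≫ τ) ≫ σ).op z = w' := by
    rw [op_comp, FunctorToTypes.map_comp_apply, hzx, ← hρ, ← FunctorToTypes.map_comp_apply,
      ← op_comp, IsSplitEpi.id, op_id, FunctorToTypes.map_id_apply]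
  have hkl : k = l' := by
    rcases lt_trichotomy k l' with h | h | h
    · exact absurd hst (hw' k h _ z)
    · exact h
    · exact absurd hts (hz l' h _ w')
  subst hkl
  have hid := nondeg_id hz (section_ σ ≫ (e ≫ τ)) hts
  have hzw : z = w' := by
    rw [← hts, hid, op_id, FunctorToTypes.map_id_apply]
  haveI := isSplitEpi_of_epi τ
  have hgy : X.map (section_ τ ≫ m).op y = z := by
    rw [op_comp, FunctorToTypes.map_comp_apply, ← hww, ← FunctorToTypes.map_comp_apply,
      ← op_comp, IsSplitEpi.id, op_id, FunctorToTypes.map_id_apply, hzw]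
  have hσf : σ ≫ (section_ τ ≫ m) = f := by
    refine hX j y hy n _ _ ?_
    rw [op_comp, FunctorToTypes.map_comp_apply, hgy, hzx, hfy]
  refine ⟨section_ τ ≫ m, ⟨hgy, hσf⟩, ?_⟩
  rintro g' ⟨-, hg'⟩
  exact (cancel_epi σ).mp (hg'.trans hσf.symm)
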